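/- arXiv:1503.04636 — 3 statements merged into one kernel-verified Lean document; each statement's English description precedes it below -/
import Mathlib

section
/- Let n ≥ 1 be an integer and let p ∈ ℚ[X] be the (unique) polynomial of degree at most n with p(0) = 0 and p(k) = A(n,k) for every integer 1 ≤ k ≤ n. Then for every integer k ≥ 1, p(−k) = (−1)^{n} · ((2n)!/(6^{n}·2^{2n})) · k · ∑_{l=1}^{n} (−1)^{l+1} · C(n+k−l, k) · P(l, n). -/
/-- `A(n,k) := (2·(2n)!/(2n+k)!) · ∑_{j=0}^{⌊k/2⌋} (−1)^j · C(k,j) · (k/2 − j)^{k+2n}` in `ℚ`. -/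
def A (n k : ℕ) : ℚ :=
  (2 * (Nat.factorial (2 * n) : ℚ) / (Nat.factorial (2 * n + k) : ℚ)) *
    ∑ j ∈ Finset.range (k / 2 + 1),
      (-1 : ℚ) ^ j * (Nat.choose k j : ℚ) * ((k : ℚ) / 2 - (j : ℚ)) ^ (k + 2 * n)

/-- Riordan's coefficients `a(n,l)`: `a(0,0) = 1`, `a(n,0) = 0` for `n ≥ 1`, and for `l ≥ 1`,
`a(n,l) = ∑_{i=l−1}^{n−1} a(i,l−1) · C(2n+l−1, 2n−2i)`. -/
def a : ℕ → ℕ → ℚ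
  | 0, 0 => 1
  | _ + 1, 0 => 0
  | n, l + 1 => ∑ i ∈ Finset.Ico l n, a i l * (Nat.choose (2 * n + l) (2 * n - 2 * i) : ℚ)

/-- The P-polynomial values `P(j,n) := 6^n · a(n, n+1−j) / ((2n)! · (n+1−j) · C(3n+1−j, 2n))`
(for `1 ≤ j ≤ n`). -/
def P (j n : ℕ) : ℚ :=
  6 ^ n * a n (n + 1 - j) /
    ((Nat.factorial (2 * n) : ℚ) * ((n + 1 - j : ℕ) : ℚ) *
      (Nat.choose (3 * n + 1 - j) (2 * n) : ℚ))

open PowerSeries Finset Polynomial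

noncomputable def Dser : PowerSeries ℚ :=
  PowerSeries.mk fun r => if r = 0 then 0 else 1 / (Nat.factorial (2*r+1) : ℚ)


lemma a_succ (n l : ℕ) :
    a n (l+1) = ∑ i ∈ Finset.Ico l n, a i l * (Nat.choose (2 * n + l) (2 * n - 2 * i) : ℚ) := by
  cases n <;> rfl


lemma coeff_X_mul_deriv (f : PowerSeries ℚ) (n : ℕ) :
    PowerSeries.coeff n (PowerSeries.X * (PowerSeries.derivative ℚ f)) = n * PowerSeries.coeff n f := by
  cases n with
  | zero => simp
  | succ n =>
    rw [PowerSeries.coeff_succ_X_mul, PowerSeries.coeff_derivative]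
    push_cast; ring


lemma coeff_Dser_pow_eq_zero {m n : ℕ} (h : n < m) : PowerSeries.coeff n (Dser ^ m) = 0 := by
  induction m generalizing n with
  | zero => omega
  | succ m ih =>
    rw [pow_succ, PowerSeries.coeff_mul, Finset.Nat.sum_antidiagonal_eq_sum_range_succ_mk]
    refine Finset.sum_eq_zero fun i hi => ?_
    rcases lt_or_ge i m with hlt | hge
    · rw [ih hlt, zero_mul]
    · have : n - i = 0 := by omega
      rw [this]
      simp [Dser, coeff_mk]


lemma keyG (m n : ℕ) :
    (n : ℚ) * m * PowerSeries.coeff n (Dser ^ (m+1))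
      = (m+1) * PowerSeries.coeff n ((PowerSeries.X * PowerSeries.derivative ℚ (Dser ^ m)) * Dser) := by
  have hL : PowerSeries.X * PowerSeries.derivative ℚ (Dser ^ (m+1))
      = (m+1) • (PowerSeries.X * PowerSeries.derivative ℚ Dser * Dser ^ m) := by
    rw [Derivation.leibniz_pow]
    simp only [smul_eq_mul, Nat.add_sub_cancel, nsmul_eq_mul]
    ring
  cases m with
  | zero => simp
  | succ m =>
    have hR : (PowerSeries.X * PowerSeries.derivative ℚ (Dser ^ (m+1))) * Dser
        = (m+1) • (PowerSeries.X * PowerSeries.derivative ℚ Dser * Dser ^ (m+1)) := by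
      rw [Derivation.leibniz_pow]
      simp only [smul_eq_mul, Nat.add_sub_cancel, nsmul_eq_mul]
      rw [pow_succ]
      ring
    push_cast
    calc (n : ℚ) * (m+1) * PowerSeries.coeff n (Dser ^ (m+1+1))
        = (m+1) * PowerSeries.coeff n (PowerSeries.X * PowerSeries.derivative ℚ (Dser ^ (m+1+1))) := by
          rw [coeff_X_mul_deriv]; ring
      _ = (m+1) * ((m+1+1) * PowerSeries.coeff n (PowerSeries.X * PowerSeries.derivative ℚ Dser * Dser ^ (m+1))) := by
          rw [hL]
          push_cast [map_nsmul]
          ring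
      _ = (m+1+1) * PowerSeries.coeff n ((PowerSeries.X * PowerSeries.derivative ℚ (Dser ^ (m+1))) * Dser) := by
          rw [hR]
          push_cast [map_nsmul]
          ring


/-- The sum identity (GG): with `c i = coeff i (D^m)` and `dq r = 1/(2r+1)!`,
`n·m·Σ_{i<n} c i·dq(n-i) = (m+1)·Σ_{i<n} i·c i·dq(n-i)`. -/
lemma keyGG (m n : ℕ) :
    (n:ℚ) * m * ∑ i ∈ Finset.range n,
        PowerSeries.coeff i (Dser^m) * (1 / (Nat.factorial (2*(n-i)+1) : ℚ))
      = (m+1) * ∑ i ∈ Finset.range n,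
        (i:ℚ) * PowerSeries.coeff i (Dser^m) * (1 / (Nat.factorial (2*(n-i)+1) : ℚ)) := by
  have h1 : PowerSeries.coeff n (Dser ^ (m+1))
      = ∑ i ∈ Finset.range n,
        PowerSeries.coeff i (Dser^m) * (1 / (Nat.factorial (2*(n-i)+1) : ℚ)) := by
    rw [pow_succ, PowerSeries.coeff_mul, Finset.Nat.sum_antidiagonal_eq_sum_range_succ_mk,
      Finset.sum_range_succ]
    have : PowerSeries.coeff (n - n) Dser = 0 := by simp [Dser, coeff_mk]
    rw [this, mul_zero, add_zero]
    refine Finset.sum_congr rfl fun i hi => ?_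
    have hi' : i < n := Finset.mem_range.mp hi
    have : PowerSeries.coeff (n - i) Dser = 1 / (Nat.factorial (2*(n-i)+1) : ℚ) := by
      simp only [Dser, coeff_mk]
      rw [if_neg (by omega)]
    rw [this]
  have h2 : PowerSeries.coeff n ((PowerSeries.X * PowerSeries.derivative ℚ (Dser ^ m)) * Dser)
      = ∑ i ∈ Finset.range n,
        (i:ℚ) * PowerSeries.coeff i (Dser^m) * (1 / (Nat.factorial (2*(n-i)+1) : ℚ)) := by
    rw [PowerSeries.coeff_mul, Finset.Nat.sum_antidiagonal_eq_sum_range_succ_mk,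
      Finset.sum_range_succ]
    have : PowerSeries.coeff (n - n) Dser = 0 := by simp [Dser, coeff_mk]
    rw [this, mul_zero, add_zero]
    refine Finset.sum_congr rfl fun i hi => ?_
    have hi' : i < n := Finset.mem_range.mp hi
    have hd : PowerSeries.coeff (n - i) Dser = 1 / (Nat.factorial (2*(n-i)+1) : ℚ) := by
      simp only [Dser, coeff_mk]
      rw [if_neg (by omega)]
    rw [hd, coeff_X_mul_deriv]
  rw [← h1, ← h2, keyG]

lemma a_eq (m n : ℕ) :
    a n m = ((Nat.factorial (2*n+m) : ℚ) / (Nat.factorial m : ℚ)) * PowerSeries.coeff n (Dser ^ m) := by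
  induction m generalizing n with
  | zero =>
    cases n with
    | zero => simp [a]
    | succ n =>
      show (0:ℚ) = _
      rw [pow_zero]
      simp [PowerSeries.coeff_one]
  | succ m ih =>
    rw [a_succ]
    -- rewrite LHS via IH and extend to range n
    have hsub : Finset.Ico m n ⊆ Finset.range n := by
      intro i hi; simp only [Finset.mem_Ico] at hi; exact Finset.mem_range.mpr hi.2
    have hL : ∑ i ∈ Finset.Ico m n, a i m * (Nat.choose (2 * n + m) (2 * n - 2 * i) : ℚ)
        = ∑ i ∈ Finset.range n,
            ((Nat.factorial (2*i+m) : ℚ) / (Nat.factorial m : ℚ)) * PowerSeries.coeff i (Dser ^ m)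
              * (Nat.choose (2 * n + m) (2 * n - 2 * i) : ℚ) := by
      rw [Finset.sum_subset hsub]
      · exact Finset.sum_congr rfl fun i _ => by rw [ih]
      · intro i hi hni
        simp only [Finset.mem_range, Finset.mem_Ico, not_and, not_le] at hi hni
        have : i < m := by omega
        rw [ih, coeff_Dser_pow_eq_zero this]
        ring
    rw [hL]
    -- rewrite RHS coefficient as a sum
    have hR : PowerSeries.coeff n (Dser ^ (m+1))
        = ∑ i ∈ Finset.range n,
          PowerSeries.coeff i (Dser^m) * (1 / (Nat.factorial (2*(n-i)+1) : ℚ)) := by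
      rw [pow_succ, PowerSeries.coeff_mul, Finset.Nat.sum_antidiagonal_eq_sum_range_succ_mk,
        Finset.sum_range_succ]
      have : PowerSeries.coeff (n - n) Dser = 0 := by simp [Dser, coeff_mk]
      rw [this, mul_zero, add_zero]
      refine Finset.sum_congr rfl fun i hi => ?_
      have hi' : i < n := Finset.mem_range.mp hi
      have : PowerSeries.coeff (n - i) Dser = 1 / (Nat.factorial (2*(n-i)+1) : ℚ) := by
        simp only [Dser, coeff_mk]
        rw [if_neg (by omega)]
      rw [this]
    rw [hR, Finset.mul_sum]
    -- now a per-term identity plus keyGG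
    have per : ∀ i ∈ Finset.range n,
        ((Nat.factorial (2*i+m) : ℚ) / (Nat.factorial m : ℚ)) * PowerSeries.coeff i (Dser ^ m)
          * (Nat.choose (2 * n + m) (2 * n - 2 * i) : ℚ)
        = (Nat.factorial (2*n+(m+1)) : ℚ) / (Nat.factorial (m+1) : ℚ) *
            (PowerSeries.coeff i (Dser^m) * (1 / (Nat.factorial (2*(n-i)+1) : ℚ)))
          + (2 * (Nat.factorial (2*n+m) : ℚ) / (Nat.factorial (m+1) : ℚ)) *
            ( ((n:ℚ) * m) * (PowerSeries.coeff i (Dser^m) * (1 / (Nat.factorial (2*(n-i)+1) : ℚ)))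
              - ((m:ℚ)+1) * ((i:ℚ) * PowerSeries.coeff i (Dser^m) * (1 / (Nat.factorial (2*(n-i)+1) : ℚ))) ) := by
      intro i hi
      have hi' : i < n := Finset.mem_range.mp hi
      have hcast : (Nat.choose (2 * n + m) (2 * n - 2 * i) : ℚ)
          = (Nat.factorial (2*n+m) : ℚ) / ((Nat.factorial (2*n-2*i) : ℚ) * (Nat.factorial (2*i+m) : ℚ)) := by
        rw [Nat.cast_choose ℚ (by omega : 2*n-2*i ≤ 2*n+m)]
        have h1 : 2*n+m - (2*n-2*i) = 2*i+m := by omega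
        rw [h1]
      have hfac1 : (Nat.factorial (2*(n-i)+1) : ℚ)
          = ((2*n-2*i:ℕ)+1 : ℚ) * (Nat.factorial (2*n-2*i) : ℚ) := by
        have h1 : 2*(n-i)+1 = (2*n-2*i)+1 := by omega
        rw [h1, Nat.factorial_succ]
        push_cast
        ring
      have hfac2 : (Nat.factorial (2*n+(m+1)) : ℚ) = ((2*n+m:ℕ)+1:ℚ) * (Nat.factorial (2*n+m) : ℚ) := by
        have h1 : 2*n+(m+1) = (2*n+m)+1 := by omega
        rw [h1, Nat.factorial_succ]
        push_cast
        ring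
      have hfac3 : (Nat.factorial (m+1) : ℚ) = ((m:ℚ)+1) * (Nat.factorial m : ℚ) := by
        rw [Nat.factorial_succ]; push_cast; ring
      have hne1 : (Nat.factorial (2*n-2*i) : ℚ) ≠ 0 := Nat.cast_ne_zero.mpr (Nat.factorial_ne_zero _)
      have hne2 : (Nat.factorial (2*i+m) : ℚ) ≠ 0 := Nat.cast_ne_zero.mpr (Nat.factorial_ne_zero _)
      have hne3 : (Nat.factorial m : ℚ) ≠ 0 := Nat.cast_ne_zero.mpr (Nat.factorial_ne_zero _)
      have hne4 : ((m:ℚ)+1) ≠ 0 := by positivity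
      have hne5 : ((2*n-2*i:ℕ)+1 : ℚ) ≠ 0 := by positivity
      rw [hcast, hfac1, hfac2, hfac3]
      have hsub : ((2*n-2*i : ℕ) : ℚ) = 2*(n:ℚ) - 2*(i:ℚ) := by
        push_cast [Nat.cast_sub (by omega : 2*i ≤ 2*n)]
        ring
      field_simp
      rw [hsub]
      push_cast
      ring
    rw [Finset.sum_congr rfl per, Finset.sum_add_distrib, ← Finset.mul_sum, ← Finset.mul_sum,
      Finset.sum_sub_distrib, ← Finset.mul_sum, ← Finset.mul_sum]
    have := keyGG m n
    rw [show ((n:ℚ) * m) * ∑ i ∈ Finset.range n,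
        PowerSeries.coeff i (Dser^m) * (1 / (Nat.factorial (2*(n-i)+1) : ℚ))
        - ((m:ℚ)+1) * ∑ i ∈ Finset.range n,
        (i:ℚ) * PowerSeries.coeff i (Dser^m) * (1 / (Nat.factorial (2*(n-i)+1) : ℚ)) = 0 from by
      rw [← this]; push_cast; ring]
    ring

noncomputable def Eser : PowerSeries ℚ :=
  PowerSeries.mk fun r => 1 / (Nat.factorial (2*r+1) : ℚ)

noncomputable def Fser : PowerSeries ℚ :=
  PowerSeries.mk fun r => if Even r then 1 / (Nat.factorial (r+1) : ℚ) else 0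


noncomputable def Sser : PowerSeries ℚ := exp ℚ - rescale (-1) (exp ℚ)


lemma one_add_Dser : 1 + Dser = Eser := by
  ext r
  cases r with
  | zero => simp [Dser, Eser, coeff_mk]
  | succ r => simp [Dser, Eser, coeff_mk, PowerSeries.coeff_one]


/-- sum over even indices -/
lemma sum_even (h : ℕ → ℚ) (hodd : ∀ i, Odd i → h i = 0) (n : ℕ) :
    ∑ i ∈ Finset.range (2*n+1), h i = ∑ b ∈ Finset.range (n+1), h (2*b) := by
  induction n with
  | zero => simp
  | succ n ih =>
    have e1 : 2*(n+1)+1 = (2*n+1) + 1 + 1 := by omega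
    rw [e1, Finset.sum_range_succ, Finset.sum_range_succ (n := 2*n+1), ih,
      Finset.sum_range_succ (n := n+1)]
    rw [hodd (2*n+1) ⟨n, by omega⟩]
    have e2 : 2*n+1+1 = 2*(n+1) := by omega
    rw [e2]
    ring

lemma coeff_Fser_pow_odd (j : ℕ) : ∀ r, Odd r → PowerSeries.coeff r (Fser ^ j) = 0 := by
  induction j with
  | zero =>
    intro r hr
    rw [pow_zero, PowerSeries.coeff_one, if_neg (by rintro rfl; simp at hr)]
  | succ j ih =>
    intro r hr
    rw [pow_succ, PowerSeries.coeff_mul, Finset.Nat.sum_antidiagonal_eq_sum_range_succ_mk]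
    refine Finset.sum_eq_zero fun i hi => ?_
    have hi' : i ≤ r := by simpa using Nat.lt_succ_iff.mp (Finset.mem_range.mp hi)
    rcases Nat.even_or_odd i with he | ho
    · have : Odd (r - i) := by
        rcases he with ⟨u, hu⟩; rcases hr with ⟨v, hv⟩; exact ⟨v - u, by omega⟩
      have : PowerSeries.coeff (r-i) Fser = 0 := by
        simp only [Fser, coeff_mk]
        rw [if_neg (by simpa [Nat.not_even_iff_odd] using this)]
      rw [this, mul_zero]
    · rw [ih i ho, zero_mul]

lemma coeff_Fser_pow_even (j n : ℕ) :
    PowerSeries.coeff (2*n) (Fser ^ j) = PowerSeries.coeff n (Eser ^ j) := by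
  induction j generalizing n with
  | zero =>
    rw [pow_zero, pow_zero, PowerSeries.coeff_one, PowerSeries.coeff_one]
    by_cases h : n = 0
    · subst h; simp
    · rw [if_neg (by omega), if_neg h]
  | succ j ih =>
    rw [pow_succ, pow_succ, PowerSeries.coeff_mul, PowerSeries.coeff_mul,
      Finset.Nat.sum_antidiagonal_eq_sum_range_succ_mk,
      Finset.Nat.sum_antidiagonal_eq_sum_range_succ_mk]
    rw [sum_even _ (fun i hi => by rw [coeff_Fser_pow_odd j i hi, zero_mul]) n]
    refine Finset.sum_congr rfl fun b hb => ?_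
    have hb' : b ≤ n := Nat.lt_succ_iff.mp (Finset.mem_range.mp hb)
    rw [ih]
    congr 1
    have e1 : 2*n - 2*b = 2*(n-b) := by omega
    simp only [Fser, Eser, coeff_mk, e1]
    rw [if_pos ⟨n-b, by omega⟩]

lemma Sser_eq : Sser = PowerSeries.C (2:ℚ) * PowerSeries.X * Fser := by
  ext r
  cases r with
  | zero =>
    have h1 : PowerSeries.coeff 0 Sser = 0 := by
      simp [Sser, map_sub, coeff_rescale, coeff_exp]
    have h2 : PowerSeries.coeff 0 (PowerSeries.C (2:ℚ) * PowerSeries.X * Fser) = 0 := by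
      simp [PowerSeries.coeff_zero_eq_constantCoeff, map_mul]
    rw [h1, h2]
  | succ r =>
    have h1 : PowerSeries.coeff (r+1) Sser
        = 1/(Nat.factorial (r+1) : ℚ) - (-1)^(r+1) * (1/(Nat.factorial (r+1) : ℚ)) := by
      simp [Sser, coeff_rescale, coeff_exp]
    have h2 : PowerSeries.coeff (r+1) (PowerSeries.C (2:ℚ) * PowerSeries.X * Fser)
        = 2 * PowerSeries.coeff r Fser := by
      rw [mul_assoc, PowerSeries.coeff_C_mul, PowerSeries.coeff_succ_X_mul]
    rw [h1, h2]
    simp only [Fser, coeff_mk]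
    rcases Nat.even_or_odd r with he | ho
    · rw [if_pos he, Odd.neg_one_pow (by simpa using he.add_one)]
      ring
    · rw [if_neg (by simpa [Nat.not_even_iff_odd] using ho), Even.neg_one_pow (by simpa using ho.add_one)]
      ring

lemma coeff_Sser_pow (j M : ℕ) :
    PowerSeries.coeff M (Sser ^ j)
      = ∑ i ∈ Finset.range (j+1),
          (-1:ℚ)^i * (Nat.choose j i : ℚ) * ((j:ℚ) - 2*i)^M / (Nat.factorial M : ℚ) := by
  have hexp : Sser ^ j = ∑ i ∈ Finset.range (j+1),
      ((-1:ℚ)^i * (Nat.choose j i : ℚ)) • rescale ((j:ℚ) - 2*i) (exp ℚ) := by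
    have hS : Sser = exp ℚ + (- rescale (-1) (exp ℚ)) := by rw [Sser]; ring
    rw [hS, add_pow]
    conv_rhs => rw [← Finset.sum_range_reflect]
    refine Finset.sum_congr rfl fun i hi => ?_
    have hi' : i ≤ j := Nat.lt_succ_iff.mp (Finset.mem_range.mp hi)
    have e0 : j + 1 - 1 - i = j - i := by omega
    rw [e0]
    have h1 : exp ℚ ^ i = rescale ((i:ℚ)) (exp ℚ) := exp_pow_eq_rescale_exp i
    have h2 : (-(rescale (-1) (exp ℚ)))^(j-i)
        = ((-1:ℚ)^(j-i)) • rescale (-((j:ℚ)-(i:ℚ))) (exp ℚ) := by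
      rw [neg_pow, ← map_pow, exp_pow_eq_rescale_exp, rescale_rescale]
      rw [PowerSeries.smul_eq_C_mul]
      congr 1
      · rw [map_pow, map_neg, map_one]
      · congr 1
        rw [Nat.cast_sub hi']
        ring
    have e1 : (i:ℚ) + -((j:ℚ)-(i:ℚ)) = (j:ℚ) - 2*((j - i : ℕ):ℚ) := by
      rw [Nat.cast_sub hi']; ring
    have hme := exp_mul_exp_eq_exp_add ((i:ℚ)) (-((j:ℚ)-(i:ℚ)))
    rw [e1] at hme
    rw [h1, h2, PowerSeries.smul_eq_C_mul, PowerSeries.smul_eq_C_mul, Nat.choose_symm hi']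
    simp only [map_mul, map_pow, map_neg, map_one, map_natCast]
    linear_combination ((j.choose i : PowerSeries ℚ) * ((-1 : PowerSeries ℚ)^(j-i))) * hme
  rw [hexp, map_sum]
  refine Finset.sum_congr rfl fun i hi => ?_
  rw [map_smul, coeff_rescale, coeff_exp]
  simp only [smul_eq_mul, Algebra.algebraMap_self, RingHom.id_apply]
  ring

lemma g_reflect (n j i : ℕ) (hij : i ≤ j) :
    (-1:ℚ)^(j-i) * (Nat.choose j (j-i) : ℚ) * ((j:ℚ)/2 - ((j-i : ℕ):ℚ))^(j+2*n)
      = (-1:ℚ)^i * (Nat.choose j i : ℚ) * ((j:ℚ)/2 - (i:ℚ))^(j+2*n) := by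
  rw [Nat.choose_symm hij]
  have h1 : (j:ℚ)/2 - ((j-i:ℕ):ℚ) = -((j:ℚ)/2 - i) := by
    rw [Nat.cast_sub hij]; ring
  rw [h1]
  have h3 : (-((j:ℚ)/2 - i))^(j+2*n) = (-1:ℚ)^(j+2*n) * ((j:ℚ)/2 - i)^(j+2*n) := by
    rw [neg_pow]
  rw [h3]
  have h4 : (-1:ℚ)^(j-i) * (-1:ℚ)^(j+2*n) = (-1:ℚ)^i := by
    rw [← pow_add]
    have h2 : j - i + (j + 2*n) = 2*(j - i + n) + i := by omega
    rw [h2, pow_add, pow_mul]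
    simp
  linear_combination ((Nat.choose j i : ℚ) * ((j:ℚ)/2 - (i:ℚ))^(j+2*n)) * h4

lemma half_double (n j : ℕ) (hn : 1 ≤ n) :
    2 * ∑ i ∈ Finset.range (j/2 + 1),
        (-1:ℚ)^i * (Nat.choose j i : ℚ) * ((j:ℚ)/2 - (i:ℚ))^(j+2*n)
      = ∑ i ∈ Finset.range (j + 1),
        (-1:ℚ)^i * (Nat.choose j i : ℚ) * ((j:ℚ)/2 - (i:ℚ))^(j+2*n) := by
  set g : ℕ → ℚ := fun i => (-1:ℚ)^i * (Nat.choose j i : ℚ) * ((j:ℚ)/2 - (i:ℚ))^(j+2*n) with hg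
  have hsplit : ∑ i ∈ Finset.range (j+1), g i
      = (∑ i ∈ Finset.range (j/2+1), g i) + ∑ i ∈ Finset.Ico (j/2+1) (j+1), g i := by
    rw [Finset.range_eq_Ico, ← Finset.sum_Ico_consecutive _ (by omega : 0 ≤ j/2+1) (by omega : j/2+1 ≤ j+1),
      ← Finset.range_eq_Ico]
  have hrefl : ∑ i ∈ Finset.Ico (j/2+1) (j+1), g i = ∑ i ∈ Finset.range (j - j/2), g i := by
    rw [Finset.sum_Ico_eq_sum_range]
    have e1 : j + 1 - (j/2+1) = j - j/2 := by omega
    rw [e1, ← Finset.sum_range_reflect]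
    refine Finset.sum_congr rfl fun i hi => ?_
    have hi' : i < j - j/2 := Finset.mem_range.mp hi
    have e2 : j/2 + 1 + (j - j/2 - 1 - i) = j - i := by omega
    rw [e2]
    have hij : i ≤ j := by omega
    simpa only [hg] using g_reflect n j i hij
  rcases Nat.even_or_odd j with he | ho
  · -- j even : L = j/2, middle term zero
    obtain ⟨u, hu⟩ := he
    subst hu
    have hL : u + u - (u+u)/2 = (u+u)/2 := by omega
    have hmid : g ((u+u)/2) = 0 := by
      have h0 : ((u+u:ℕ):ℚ)/2 - ((((u+u)/2) : ℕ):ℚ) = 0 := by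
        have e : (u + u) / 2 = u := by omega
        rw [e]
        push_cast
        ring
      simp only [hg, h0]
      rw [zero_pow (by omega : u + u + 2*n ≠ 0)]
      ring
    have hhs : ∑ i ∈ Finset.range ((u+u)/2+1), g i = ∑ i ∈ Finset.range ((u+u)/2), g i := by
      rw [Finset.sum_range_succ, hmid, add_zero]
    rw [hsplit, hrefl, hL, hhs]
    ring
  · have hL : j - j/2 = j/2 + 1 := by
      rcases ho with ⟨u, hu⟩; omega
    rw [hsplit, hrefl, hL]
    ring

lemma A_eq_coeff (n j : ℕ) (hn : 1 ≤ n) :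
    A n j = (Nat.factorial (2*n) : ℚ) / 4^n * PowerSeries.coeff n (Eser^j) := by
  have hfs : ∑ i ∈ Finset.range (j + 1),
        (-1:ℚ)^i * (Nat.choose j i : ℚ) * ((j:ℚ)/2 - (i:ℚ))^(j+2*n)
      = (Nat.factorial (j+2*n) : ℚ) / 2^(j+2*n) * (2^j * PowerSeries.coeff n (Eser^j)) := by
    have hpt : ∀ i ∈ Finset.range (j+1),
        (-1:ℚ)^i * (Nat.choose j i : ℚ) * ((j:ℚ)/2 - (i:ℚ))^(j+2*n)
        = (Nat.factorial (j+2*n) : ℚ) / 2^(j+2*n) *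
            ((-1:ℚ)^i * (Nat.choose j i : ℚ) * ((j:ℚ) - 2*i)^(j+2*n) / (Nat.factorial (j+2*n) : ℚ)) := by
      intro i _
      have h2 : (j:ℚ)/2 - (i:ℚ) = ((j:ℚ) - 2*i)/2 := by ring
      have hne : (Nat.factorial (j+2*n) : ℚ) ≠ 0 := Nat.cast_ne_zero.mpr (Nat.factorial_ne_zero _)
      rw [h2, div_pow]
      field_simp
    rw [Finset.sum_congr rfl hpt, ← Finset.mul_sum, ← coeff_Sser_pow]
    congr 1
    -- coeff (j+2n) (S^j) = 2^j coeff n (E^j)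
    have hS : Sser ^ j = PowerSeries.C ((2:ℚ)^j) * (PowerSeries.X^j * Fser^j) := by
      rw [Sser_eq, mul_pow, mul_pow, map_pow, mul_assoc]
    rw [hS]
    have e1 : j + 2*n = 2*n + j := by omega
    rw [PowerSeries.coeff_C_mul, e1, PowerSeries.coeff_X_pow_mul, coeff_Fser_pow_even]
  have h2hs := half_double n j hn
  rw [A]
  rw [show (2 * (Nat.factorial (2 * n) : ℚ) / (Nat.factorial (2 * n + j) : ℚ)) *
      ∑ i ∈ Finset.range (j / 2 + 1),
        (-1 : ℚ) ^ i * (Nat.choose j i : ℚ) * ((j : ℚ) / 2 - (i : ℚ)) ^ (j + 2 * n)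
      = ((Nat.factorial (2 * n) : ℚ) / (Nat.factorial (2 * n + j) : ℚ)) *
        (2 * ∑ i ∈ Finset.range (j / 2 + 1),
          (-1 : ℚ) ^ i * (Nat.choose j i : ℚ) * ((j : ℚ) / 2 - (i : ℚ)) ^ (j + 2 * n)) from by ring]
  rw [h2hs, hfs]
  have e2 : j + 2*n = 2*n + j := by omega
  rw [e2]
  have hne1 : (Nat.factorial (2*n+j) : ℚ) ≠ 0 := Nat.cast_ne_zero.mpr (Nat.factorial_ne_zero _)
  have hne2 : (2:ℚ) ≠ 0 := two_ne_zero
  rw [pow_add, pow_mul]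
  field_simp
  rw [show ((2:ℚ)^2)^n = 4^n from by norm_num]
  ring

lemma A_sum (n j : ℕ) (hn : 1 ≤ n) :
    A n j = ∑ m ∈ Finset.range (j+1),
      (Nat.choose j m : ℚ) * ((Nat.factorial (2*n) : ℚ) * (Nat.factorial m : ℚ)
          / (4^n * (Nat.factorial (2*n+m) : ℚ))) * a n m := by
  rw [A_eq_coeff n j hn, ← one_add_Dser]
  have hbin : (1 + Dser)^j = ∑ m ∈ Finset.range (j+1),
      Dser^m * (1:PowerSeries ℚ)^(j-m) * (Nat.choose j m : PowerSeries ℚ) := by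
    rw [add_comm, add_pow]
  rw [hbin, map_sum, Finset.mul_sum]
  refine Finset.sum_congr rfl fun m _ => ?_
  have hc : PowerSeries.coeff n (Dser^m * (1:PowerSeries ℚ)^(j-m) * (Nat.choose j m : PowerSeries ℚ))
      = (Nat.choose j m : ℚ) * PowerSeries.coeff n (Dser^m) := by
    rw [one_pow, mul_one]
    rw [show (Nat.choose j m : PowerSeries ℚ) = PowerSeries.C (Nat.choose j m : ℚ) from by
      rw [map_natCast]]
    rw [PowerSeries.coeff_mul_C]
    ring
  rw [hc]
  have hma := a_eq m n
  have hne1 : (Nat.factorial (2*n+m) : ℚ) ≠ 0 := Nat.cast_ne_zero.mpr (Nat.factorial_ne_zero _)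
  have hne2 : (Nat.factorial m : ℚ) ≠ 0 := Nat.cast_ne_zero.mpr (Nat.factorial_ne_zero _)
  have hcoeff : PowerSeries.coeff n (Dser^m)
      = a n m * (Nat.factorial m : ℚ) / (Nat.factorial (2*n+m) : ℚ) := by
    rw [hma]; field_simp
  rw [hcoeff]
  field_simp

lemma a_zero (n : ℕ) (hn : 1 ≤ n) : a n 0 = 0 := by
  match n, hn with
  | (k+1), _ => rfl

noncomputable def Bpoly (d : ℕ) : Polynomial ℚ :=
  ∏ i ∈ Finset.range d, (Polynomial.C ((i:ℚ)+1) - Polynomial.X)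

noncomputable def qpoly (n : ℕ) : Polynomial ℚ :=
  Polynomial.C ((-1:ℚ)^n * ((Nat.factorial (2*n) : ℚ) / (6^n * 2^(2*n)))) * (-Polynomial.X) *
    ∑ l ∈ Finset.Icc 1 n,
      Polynomial.C ((-1:ℚ)^(l+1) * P l n / (Nat.factorial (n-l) : ℚ)) * Bpoly (n-l)

lemma eval_Bpoly (d : ℕ) (x : ℚ) :
    Polynomial.eval x (Bpoly d) = ∏ i ∈ Finset.range d, ((i:ℚ) + 1 - x) := by
  simp [Bpoly, Polynomial.eval_prod]

lemma asc_prod (k : ℕ) : ∀ d : ℕ,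
    ∏ i ∈ Finset.range d, ((i:ℚ) + 1 + (k:ℚ)) = (Nat.factorial (k+d) : ℚ) / (Nat.factorial k : ℚ) := by
  intro d
  induction d with
  | zero =>
    rw [Finset.range_zero, Finset.prod_empty, Nat.add_zero,
      div_self (Nat.cast_ne_zero.mpr (Nat.factorial_ne_zero k))]
  | succ d ih =>
    rw [Finset.prod_range_succ, ih]
    have h1 : Nat.factorial (k+(d+1)) = (k+d+1) * Nat.factorial (k+d) := by
      rw [show k+(d+1) = (k+d)+1 from by omega, Nat.factorial_succ]
    rw [h1]
    have hne : (Nat.factorial k : ℚ) ≠ 0 := Nat.cast_ne_zero.mpr (Nat.factorial_ne_zero _)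
    field_simp
    push_cast
    ring

lemma desc_prod (j : ℕ) : ∀ d : ℕ, d < j →
    ∏ i ∈ Finset.range d, ((i:ℚ) + 1 - (j:ℚ))
      = (-1:ℚ)^d * (Nat.factorial (j-1) : ℚ) / (Nat.factorial (j-1-d) : ℚ) := by
  intro d
  induction d with
  | zero =>
    intro _
    rw [Finset.range_zero, Finset.prod_empty, pow_zero, one_mul, Nat.sub_zero,
      div_self (Nat.cast_ne_zero.mpr (Nat.factorial_ne_zero (j-1)))]
  | succ d ih =>
    intro hd
    rw [Finset.prod_range_succ, ih (by omega)]
    have h1 : Nat.factorial (j-1-d) = (j-1-d) * Nat.factorial (j-1-(d+1)) := by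
      rw [show j-1-d = (j-1-(d+1))+1 from by omega, Nat.factorial_succ]
    have h2 : ((d:ℚ) + 1 - (j:ℚ)) = -(((j-1-d : ℕ)):ℚ) := by
      rw [Nat.cast_sub (by omega : d ≤ j - 1), Nat.cast_sub (by omega : 1 ≤ j)]
      push_cast
      ring
    rw [h1, h2]
    have hne1 : (Nat.factorial (j-1-(d+1)) : ℚ) ≠ 0 := Nat.cast_ne_zero.mpr (Nat.factorial_ne_zero _)
    have hne2 : ((j-1-d : ℕ) : ℚ) ≠ 0 := by
      rw [Nat.cast_ne_zero]
      omega
    push_cast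
    field_simp
    ring

lemma qpoly_natDegree_le (n : ℕ) (hn : 1 ≤ n) : (qpoly n).natDegree ≤ n := by
  have hB : ∀ d : ℕ, (Bpoly d).natDegree ≤ d := by
    intro d
    refine le_trans (Polynomial.natDegree_prod_le _ _) ?_
    calc ∑ i ∈ Finset.range d, (Polynomial.C ((i:ℚ)+1) - Polynomial.X).natDegree
        ≤ ∑ _i ∈ Finset.range d, 1 := by
          refine Finset.sum_le_sum fun i _ => ?_
          refine le_trans (Polynomial.natDegree_sub_le _ _) ?_
          rw [Polynomial.natDegree_C, Polynomial.natDegree_X]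
          simp
      _ = d := by simp
  have hsum : (∑ l ∈ Finset.Icc 1 n,
      Polynomial.C ((-1:ℚ)^(l+1) * P l n / (Nat.factorial (n-l) : ℚ)) * Bpoly (n-l)).natDegree ≤ n - 1 := by
    refine Polynomial.natDegree_sum_le_of_forall_le _ _ fun l hl => ?_
    have hl' : 1 ≤ l ∧ l ≤ n := Finset.mem_Icc.mp hl
    refine le_trans (Polynomial.natDegree_mul_le) ?_
    rw [Polynomial.natDegree_C, zero_add]
    exact le_trans (hB _) (by omega)
  refine le_trans (Polynomial.natDegree_mul_le) ?_
  have h1 : (Polynomial.C ((-1:ℚ)^n * ((Nat.factorial (2*n) : ℚ) / (6^n * 2^(2*n)))) *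
      (-Polynomial.X : Polynomial ℚ)).natDegree ≤ 1 := by
    refine le_trans (Polynomial.natDegree_mul_le) ?_
    rw [Polynomial.natDegree_C, Polynomial.natDegree_neg, Polynomial.natDegree_X]
  omega

lemma qpoly_eval_zero (n : ℕ) : Polynomial.eval 0 (qpoly n) = 0 := by
  simp [qpoly]

lemma qpoly_eval_neg (n k : ℕ) (hn : 1 ≤ n) :
    Polynomial.eval (-(k:ℚ)) (qpoly n) =
      (-1 : ℚ) ^ n * ((Nat.factorial (2 * n) : ℚ) / (6 ^ n * 2 ^ (2 * n))) * (k : ℚ) *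
        ∑ l ∈ Finset.Icc 1 n,
          (-1 : ℚ) ^ (l + 1) * (Nat.choose (n + k - l) k : ℚ) * P l n := by
  rw [qpoly]
  rw [Polynomial.eval_mul, Polynomial.eval_mul, Polynomial.eval_C, Polynomial.eval_neg,
    Polynomial.eval_X, Polynomial.eval_finset_sum]
  rw [Finset.mul_sum, Finset.mul_sum]
  rw [show (-1:ℚ)^n * ((Nat.factorial (2*n) : ℚ) / (6^n * 2^(2*n))) * - -(k:ℚ)
      = (-1:ℚ)^n * ((Nat.factorial (2*n) : ℚ) / (6^n * 2^(2*n))) * (k:ℚ) from by ring]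
  refine Finset.sum_congr rfl fun l hl => ?_
  obtain ⟨hl1, hl2⟩ := Finset.mem_Icc.mp hl
  rw [Polynomial.eval_mul, Polynomial.eval_C, eval_Bpoly]
  have hprod : ∏ i ∈ Finset.range (n-l), ((i:ℚ) + 1 - -(k:ℚ))
      = (Nat.factorial (k+(n-l)) : ℚ) / (Nat.factorial k : ℚ) := by
    rw [← asc_prod k (n-l)]
    exact Finset.prod_congr rfl fun i _ => by ring
  rw [hprod]
  have hchoose : (Nat.choose (n+k-l) k : ℚ)
      = (Nat.factorial (k+(n-l)) : ℚ) / ((Nat.factorial k : ℚ) * (Nat.factorial (n-l) : ℚ)) := by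
    have e1 : n+k-l = k+(n-l) := by omega
    rw [e1, Nat.cast_choose ℚ (by omega : k ≤ k+(n-l))]
    have e2 : k+(n-l)-k = n-l := by omega
    rw [e2]
  rw [hchoose]
  have hne1 : (Nat.factorial k : ℚ) ≠ 0 := Nat.cast_ne_zero.mpr (Nat.factorial_ne_zero _)
  have hne2 : (Nat.factorial (n-l) : ℚ) ≠ 0 := Nat.cast_ne_zero.mpr (Nat.factorial_ne_zero _)
  field_simp

lemma qpoly_eval_pos (n j : ℕ) (hn : 1 ≤ n) (hj1 : 1 ≤ j) (hjn : j ≤ n) :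
    Polynomial.eval (j:ℚ) (qpoly n) = A n j := by
  rw [A_sum n j hn, Finset.sum_range_succ']
  rw [show (Nat.choose j 0 : ℚ) * ((Nat.factorial (2*n) : ℚ) * (Nat.factorial 0 : ℚ)
      / (4^n * (Nat.factorial (2*n+0) : ℚ))) * a n 0 = 0 from by rw [a_zero n hn]; ring, add_zero]
  -- evaluate the polynomial
  rw [qpoly, Polynomial.eval_mul, Polynomial.eval_mul, Polynomial.eval_C, Polynomial.eval_neg,
    Polynomial.eval_X, Polynomial.eval_finset_sum]
  have hterm : ∀ l ∈ Finset.Icc 1 n,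
      Polynomial.eval (j:ℚ) (Polynomial.C ((-1:ℚ)^(l+1) * P l n / (Nat.factorial (n-l) : ℚ)) * Bpoly (n-l))
      = ((-1:ℚ)^(l+1) * P l n / (Nat.factorial (n-l) : ℚ)) *
          ∏ i ∈ Finset.range (n-l), ((i:ℚ) + 1 - (j:ℚ)) := by
    intro l _
    rw [Polynomial.eval_mul, Polynomial.eval_C, eval_Bpoly]
  rw [Finset.sum_congr rfl hterm]
  -- kill the terms with l ≤ n - j
  have hsubset : Finset.Icc (n+1-j) n ⊆ Finset.Icc 1 n := by
    intro l hl
    simp only [Finset.mem_Icc] at hl ⊢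
    omega
  rw [← Finset.sum_subset hsubset (by
    intro l hl hnl
    simp only [Finset.mem_Icc] at hl hnl
    have hlj : j - 1 ∈ Finset.range (n - l) := Finset.mem_range.mpr (by omega)
    have hzero : ∏ i ∈ Finset.range (n-l), ((i:ℚ) + 1 - (j:ℚ)) = 0 := by
      apply Finset.prod_eq_zero hlj
      rw [Nat.cast_sub hj1]
      push_cast
      ring
    rw [hzero, mul_zero])]
  -- reindex : l = n+1-j+i  for i ∈ range j
  rw [← Finset.Ico_add_one_right_eq_Icc, Finset.sum_Ico_eq_sum_range,
    show n + 1 - (n+1-j) = j from by omega]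
  conv_rhs => rw [← Finset.sum_range_reflect]
  rw [Finset.mul_sum]
  refine Finset.sum_congr rfl fun i hi => ?_
  have hij : i < j := Finset.mem_range.mp hi
  -- index bookkeeping, l = n+1-j+i
  have e1 : n - (n+1-j+i) = j-1-i := by omega
  have e2 : n + 1 - (n+1-j+i) = j-i := by omega
  have e3 : 3*n + 1 - (n+1-j+i) = 2*n + (j-i) := by omega
  have e4 : j - 1 - i + 1 = j - i := by omega
  rw [e1, desc_prod j (j-1-i) (by omega), e4]
  simp only [P, e2, e3]
  have e5 : j - 1 - (j-1-i) = i := by omega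
  rw [e5]
  -- sign elimination
  have hsign : (-1:ℚ)^n * ((-1:ℚ)^((n+1-j+i)+1) * (-1:ℚ)^(j-1-i)) = -1 := by
    rw [← pow_add, ← pow_add, show n + ((n+1-j+i)+1 + (j-1-i)) = 2*n+1 from by omega,
      pow_succ, pow_mul]
    norm_num
  rw [show (-1:ℚ)^n * ((Nat.factorial (2*n) : ℚ) / (6^n * 2^(2*n))) * -(j:ℚ) *
        ((-1:ℚ)^((n+1-j+i)+1) *
            (6 ^ n * a n (j-i) /
              ((Nat.factorial (2 * n) : ℚ) * ((j - i : ℕ) : ℚ) * (Nat.choose (2*n + (j-i)) (2 * n) : ℚ)))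
          / (Nat.factorial (j-1-i) : ℚ) *
          ((-1:ℚ)^(j-1-i) * (Nat.factorial (j-1) : ℚ) / (Nat.factorial i : ℚ)))
      = ((-1:ℚ)^n * ((-1:ℚ)^((n+1-j+i)+1) * (-1:ℚ)^(j-1-i))) *
        (((Nat.factorial (2*n) : ℚ) / (6^n * 2^(2*n))) * -(j:ℚ) *
          ((6 ^ n * a n (j-i) /
              ((Nat.factorial (2 * n) : ℚ) * ((j - i : ℕ) : ℚ) * (Nat.choose (2*n + (j-i)) (2 * n) : ℚ)))
            / (Nat.factorial (j-1-i) : ℚ) *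
            ((Nat.factorial (j-1) : ℚ) / (Nat.factorial i : ℚ)))) from by ring, hsign]
  -- cast facts
  have hc1 : (Nat.choose j (j-i) : ℚ)
      = (Nat.factorial j : ℚ) / ((Nat.factorial (j-i) : ℚ) * (Nat.factorial i : ℚ)) := by
    rw [Nat.cast_choose ℚ (by omega : j-i ≤ j)]
    have e : j - (j-i) = i := by omega
    rw [e]
  have hc2 : (Nat.choose (2*n+(j-i)) (2*n) : ℚ)
      = (Nat.factorial (2*n+(j-i)) : ℚ) / ((Nat.factorial (2*n) : ℚ) * (Nat.factorial (j-i) : ℚ)) := by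
    rw [Nat.cast_choose ℚ (by omega : 2*n ≤ 2*n+(j-i))]
    have e : 2*n+(j-i) - 2*n = j-i := by omega
    rw [e]
  have hfj : (Nat.factorial j : ℚ) = (j:ℚ) * (Nat.factorial (j-1) : ℚ) := by
    rw [show j = (j-1)+1 from by omega, Nat.factorial_succ]
    push_cast [show (j-1)+1 = j from by omega]
    ring
  have hfm : (Nat.factorial (j-i) : ℚ) = ((j-i : ℕ):ℚ) * (Nat.factorial (j-1-i) : ℚ) := by
    rw [show j-i = (j-1-i)+1 from by omega, Nat.factorial_succ]
    push_cast [show (j-1-i)+1 = j-i from by omega]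
    ring
  have h4 : (2:ℚ)^(2*n) = 4^n := by
    rw [pow_mul]; norm_num
  have hne : ∀ m : ℕ, (Nat.factorial m : ℚ) ≠ 0 := fun m => Nat.cast_ne_zero.mpr (Nat.factorial_ne_zero _)
  have hnem : ((j-i : ℕ):ℚ) ≠ 0 := Nat.cast_ne_zero.mpr (by omega)
  have hne6 : (6:ℚ)^n ≠ 0 := by positivity
  have hne4 : (4:ℚ)^n ≠ 0 := by positivity
  rw [hc1, hc2, hfj, hfm, h4]
  field_simp

/-- Let `n ≥ 1` and let `p ∈ ℚ[X]` be the polynomial of degree at most `n`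
with `p(0) = 0` and `p(k) = A(n,k)` for `1 ≤ k ≤ n`. Then for every integer `k ≥ 1`,
`p(−k) = (−1)^n · ((2n)!/(6^n·2^{2n})) · k · ∑_{l=1}^{n} (−1)^{l+1} · C(n+k−l, k) · P(l, n)`. -/
theorem eval_neg_eq_P_sum (n : ℕ) (hn : 1 ≤ n) (p : Polynomial ℚ)
    (hdeg : p.natDegree ≤ n) (h0 : p.eval 0 = 0)
    (hA : ∀ k : ℕ, 1 ≤ k → k ≤ n → p.eval (k : ℚ) = A n k) (k : ℕ) (hk : 1 ≤ k) :
    p.eval (-(k : ℚ)) =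
      (-1 : ℚ) ^ n * ((Nat.factorial (2 * n) : ℚ) / (6 ^ n * 2 ^ (2 * n))) * (k : ℚ) *
        ∑ l ∈ Finset.Icc 1 n,
          (-1 : ℚ) ^ (l + 1) * (Nat.choose (n + k - l) k : ℚ) * P l n := by
  have hpq : p = qpoly n := by
    set s : Finset ℚ := (Finset.range (n+1)).image (Nat.cast : ℕ → ℚ) with hs
    have hcard : s.card = n + 1 := by
      rw [hs, Finset.card_image_of_injective _ Nat.cast_injective, Finset.card_range]
    have hdegs : ∀ r : Polynomial ℚ, r.natDegree ≤ n → r.degree < (s.card : WithBot ℕ) := by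
      intro r hr
      refine lt_of_le_of_lt (Polynomial.degree_le_natDegree) ?_
      rw [hcard]
      exact_mod_cast Nat.lt_succ_of_le hr
    refine Polynomial.eq_of_degrees_lt_of_eval_finset_eq s
      (hdegs p hdeg) (hdegs _ (qpoly_natDegree_le n hn)) ?_
    intro x hx
    obtain ⟨i, hi, rfl⟩ := Finset.mem_image.mp hx
    have hi' : i ≤ n := Nat.lt_succ_iff.mp (Finset.mem_range.mp hi)
    rcases Nat.eq_zero_or_pos i with rfl | hpos
    · rw [Nat.cast_zero, h0, qpoly_eval_zero]
    · rw [hA i hpos hi', qpoly_eval_pos n i hn hpos hi']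
  rw [hpq, qpoly_eval_neg n k hn]
end

section
/- For every integer n ≥ 1, B_{2n}/(2n) = ((2n)!/(6^{n}·2^{2n})) · ∑_{l=1}^{n} (−1)^{l+1} · P(n+1−l, n). -/
namespace Riordan

open PowerSeries Finset

lemma a_succ (n l : ℕ) :
    a n (l + 1) = ∑ i ∈ Finset.Ico l n, a i l * (Nat.choose (2 * n + l) (2 * n - 2 * i) : ℚ) := by
  cases n <;> rfl

lemma a_eq_zero {n l : ℕ} (h : n < l) : a n l = 0 := by
  match l with
  | 0 => omega
  | l + 1 =>
    rw [a_succ, Finset.Ico_eq_empty (by omega), Finset.sum_empty]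

/-- helper: a sum over a range where only indices of the form `2*i+c` contribute. -/
lemma sum_range_shift (h : ℕ → ℚ) (m t c : ℕ)
    (hzero : ∀ j, j ≤ m → (∀ i, i < t → j ≠ 2 * i + c) → h j = 0)
    (hbound : ∀ i, i < t → 2 * i + c ≤ m) :
    ∑ j ∈ Finset.range (m + 1), h j = ∑ i ∈ Finset.range t, h (2 * i + c) := by
  rw [← Finset.sum_image (s := Finset.range t) (g := fun i => 2 * i + c) (f := h)
    (by intro x _ y _ hxy; simp only [] at hxy; omega)]
  refine (Finset.sum_subset ?_ ?_).symm
  · intro j hj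
    simp only [Finset.mem_image, Finset.mem_range] at hj ⊢
    obtain ⟨i, hi, rfl⟩ := hj
    exact Nat.lt_succ_of_le (hbound i hi)
  · intro j hj hj'
    simp only [Finset.mem_image, Finset.mem_range] at hj hj'
    exact hzero j (by omega) (fun i hi hji => hj' ⟨i, hi, hji.symm⟩)

/-- `v = sinh X - X` as a formal power series over ℚ. -/
noncomputable def v : PowerSeries ℚ :=
  PowerSeries.mk fun m => if Odd m ∧ m ≠ 1 then (1 : ℚ) / m.factorial else 0

lemma coeff_v (m : ℕ) :
    PowerSeries.coeff m v = if Odd m ∧ m ≠ 1 then (1 : ℚ) / m.factorial else 0 :=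
  coeff_mk _ _

lemma coeff_vpow_odd : ∀ l m : ℕ, (m + l) % 2 = 1 → PowerSeries.coeff m (v ^ l) = 0 := by
  intro l
  induction l with
  | zero =>
    intro m hm
    rw [pow_zero, PowerSeries.coeff_one, if_neg (by omega)]
  | succ l ih =>
    intro m hm
    rw [pow_succ, PowerSeries.coeff_mul]
    apply Finset.sum_eq_zero
    intro p hp
    rw [Finset.HasAntidiagonal.mem_antidiagonal] at hp
    by_cases h2 : Odd p.2 ∧ p.2 ≠ 1
    · have : PowerSeries.coeff p.1 (v ^ l) = 0 := by
        apply ih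
        have := h2.1
        rw [Nat.odd_iff] at this
        omega
      rw [this, zero_mul]
    · rw [coeff_v, if_neg h2, mul_zero]

lemma X_pow_dvd_v : (X : PowerSeries ℚ) ^ 3 ∣ v := by
  rw [PowerSeries.X_pow_dvd_iff]
  intro m hm
  rw [coeff_v, if_neg]
  rintro ⟨h1, h2⟩
  rw [Nat.odd_iff] at h1
  omega

lemma coeff_vpow_of_lt {l m : ℕ} (h : m < 3 * l) : PowerSeries.coeff m (v ^ l) = 0 := by
  have : (X : PowerSeries ℚ) ^ (3 * l) ∣ v ^ l := by
    rw [pow_mul]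
    exact pow_dvd_pow_of_dvd X_pow_dvd_v l
  exact PowerSeries.X_pow_dvd_iff.mp this m h

lemma fact_succ_q (k : ℕ) : ((k + 1).factorial : ℚ) = (k + 1 : ℚ) * k.factorial := by
  rw [Nat.factorial_succ]; push_cast; ring

lemma coeff_Dv (k : ℕ) :
    PowerSeries.coeff k ((d⁄dX ℚ) v) = if Even k ∧ k ≠ 0 then (1 : ℚ) / k.factorial else 0 := by
  rw [PowerSeries.coeff_derivative, coeff_v]
  have h' : (Even k ∧ k ≠ 0) ↔ (k % 2 = 0 ∧ k ≠ 0) := by rw [Nat.even_iff]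
  by_cases h : Even k ∧ k ≠ 0
  · rw [h'] at h
    rw [if_pos (show Odd (k + 1) ∧ k + 1 ≠ 1 by
        refine ⟨?_, by omega⟩
        rw [Nat.odd_iff]; omega),
      if_pos (h'.mpr h), fact_succ_q]
    have hk : (k.factorial : ℚ) ≠ 0 := Nat.cast_ne_zero.mpr (Nat.factorial_ne_zero k)
    have hk1 : (k : ℚ) + 1 ≠ 0 := by positivity
    field_simp
  · rw [h'] at h
    rw [if_neg (show ¬(Odd (k + 1) ∧ k + 1 ≠ 1) by
        rintro ⟨h1, h2⟩
        rw [Nat.odd_iff] at h1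
        exact h ⟨by omega, by omega⟩),
      if_neg (by rw [h']; exact h), zero_mul]

lemma coeff_vpow : ∀ l n : ℕ, PowerSeries.coeff (2 * n + l) (v ^ l)
    = l.factorial * a n l / (2 * n + l).factorial := by
  intro l
  induction l with
  | zero =>
    intro n
    rw [pow_zero, PowerSeries.coeff_one]
    cases n with
    | zero => simp [a]
    | succ n => simp [a]
  | succ l ih =>
    intro n
    have hD : (d⁄dX ℚ) (v ^ (l + 1)) = (l + 1) • ((v ^ l) • (d⁄dX ℚ) v) := by
      simpa using Derivation.leibniz_pow (d⁄dX ℚ) (a := v) (l + 1)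
    have h1 : PowerSeries.coeff (2 * n + (l + 1)) (v ^ (l + 1)) * (2 * (n : ℚ) + l + 1)
        = ((l : ℚ) + 1) * PowerSeries.coeff (2 * n + l) ((v ^ l) * (d⁄dX ℚ) v) := by
      have h0 := PowerSeries.coeff_derivative (v ^ (l + 1)) (2 * n + l)
      rw [hD, map_nsmul, smul_eq_mul, nsmul_eq_mul] at h0
      have he : (2 * n + (l + 1)) = (2 * n + l + 1) := by omega
      rw [he]
      push_cast at h0 ⊢
      linarith [h0]
    have h2 : PowerSeries.coeff (2 * n + l) ((v ^ l) * (d⁄dX ℚ) v)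
        = ∑ i ∈ Finset.range n,
            (l.factorial * a i l / (2 * i + l).factorial) * (1 / (2 * (n - i)).factorial) := by
      rw [PowerSeries.coeff_mul, Finset.Nat.sum_antidiagonal_eq_sum_range_succ_mk]
      dsimp only
      rw [sum_range_shift _ (2 * n + l) n l]
      · apply Finset.sum_congr rfl
        intro i hi
        rw [Finset.mem_range] at hi
        rw [show 2*n+l-(2*i+l) = 2*(n-i) by omega, ih i, coeff_Dv,
          if_pos (show Even (2*(n-i)) ∧ 2*(n-i) ≠ 0 from ⟨even_two_mul _, by omega⟩)]
      · intro j hj hji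
        by_cases hp : (j + l) % 2 = 1
        · rw [coeff_vpow_odd l j hp, zero_mul]
        · by_cases hjl : j < l
          · rw [coeff_vpow_of_lt (by omega), zero_mul]
          · have hj2 : j = 2 * n + l := by
              rcases Nat.even_or_odd (j - l) with he | ho
              · rw [Nat.even_iff] at he
                have := hji ((j - l) / 2)
                omega
              · rw [Nat.odd_iff] at ho
                omega
            rw [hj2, coeff_Dv, if_neg (by omega), mul_zero]
      · intro i hi
        omega
    have ha : a n (l + 1) = ∑ i ∈ Finset.range n,
        a i l * (Nat.choose (2 * n + l) (2 * n - 2 * i) : ℚ) := by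
      rw [a_succ]
      refine Finset.sum_subset ?_ ?_
      · intro i hi
        rw [Finset.mem_Ico] at hi
        exact Finset.mem_range.mpr hi.2
      · intro i hi hi'
        rw [Finset.mem_range] at hi
        rw [Finset.mem_Ico, not_and_or] at hi'
        have : i < l := by omega
        rw [a_eq_zero this, zero_mul]
    have hcast : (2 * (n : ℚ) + l + 1) ≠ 0 := by positivity
    have key : PowerSeries.coeff (2 * n + (l + 1)) (v ^ (l + 1))
        = ((l : ℚ) + 1) * (∑ i ∈ Finset.range n,
            (l.factorial * a i l / (2 * i + l).factorial) * (1 / (2 * (n - i)).factorial))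
          / (2 * (n : ℚ) + l + 1) := by
      rw [← h2, eq_div_iff hcast]
      exact h1
    rw [key, ha, Finset.mul_sum, Finset.sum_div, Finset.mul_sum, Finset.sum_div]
    apply Finset.sum_congr rfl
    intro i hi
    rw [Finset.mem_range] at hi
    have hC := Nat.choose_mul_factorial_mul_factorial (show 2*n-2*i ≤ 2*n+l by omega)
    rw [show 2*n+l - (2*n-2*i) = 2*i+l by omega] at hC
    have hC' : ((2*n+l).choose (2*n-2*i) : ℚ) * (2*n-2*i).factorial * (2*i+l).factorial
        = (2*n+l).factorial := by exact_mod_cast congrArg (Nat.cast : ℕ → ℚ) hC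
    have e1 : ((2*(n-i)).factorial : ℚ) = ((2*n-2*i).factorial : ℚ) := by
      rw [show 2*(n-i) = 2*n-2*i by omega]
    have e2 : ((2*n+(l+1)).factorial : ℚ) = (2 * (n:ℚ) + l + 1) * (2*n+l).factorial := by
      rw [show 2*n+(l+1) = (2*n+l)+1 by omega, fact_succ_q]
      push_cast
      ring
    have e3 : (((l+1)).factorial : ℚ) = ((l : ℚ) + 1) * l.factorial := by
      rw [fact_succ_q]
    have f1 : ((2*i+l).factorial : ℚ) ≠ 0 := Nat.cast_ne_zero.mpr (Nat.factorial_ne_zero _)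
    have f2 : ((2*n-2*i).factorial : ℚ) ≠ 0 := Nat.cast_ne_zero.mpr (Nat.factorial_ne_zero _)
    have f3 : ((2*n+l).factorial : ℚ) ≠ 0 := Nat.cast_ne_zero.mpr (Nat.factorial_ne_zero _)
    have f4 : (2 * (n:ℚ) + l + 1) ≠ 0 := by positivity
    have hCQ : ((2*n+l).choose (2*n-2*i) : ℚ)
        = (2*n+l).factorial / ((2*n-2*i).factorial * (2*i+l).factorial) := by
      rw [eq_div_iff (mul_ne_zero f2 f1)]
      linear_combination hC'
    rw [e1, e2, e3, hCQ]
    field_simp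

noncomputable def W : PowerSeries ℚ := X * (d⁄dX ℚ) v - v

noncomputable def K (N : ℕ) : PowerSeries ℚ :=
  ∑ l ∈ Finset.Icc 1 N, (-1 : PowerSeries ℚ) ^ (l + 1) * (v ^ (l - 1) * W * X ^ (N - l))

noncomputable def b (k : ℕ) : ℚ :=
  ∑ l ∈ Finset.Icc 1 k, (-1 : ℚ) ^ (l + 1) * (l - 1).factorial * a k l / (2 * k + l).factorial

lemma coeff_neg_one_pow_mul (j s : ℕ) (f : PowerSeries ℚ) :
    PowerSeries.coeff s ((-1 : PowerSeries ℚ) ^ j * f) = (-1 : ℚ) ^ j * PowerSeries.coeff s f := by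
  have h : ((-1 : PowerSeries ℚ)) ^ j = C ((-1 : ℚ) ^ j) := by
    rw [map_pow, map_neg, map_one]
  rw [h, PowerSeries.coeff_C_mul]

lemma coeff_Kterm {l : ℕ} (hl : 1 ≤ l) (s : ℕ) :
    PowerSeries.coeff s (v ^ (l - 1) * W)
      = ((s : ℚ) / l - 1) * PowerSeries.coeff s (v ^ l) := by
  have hvl : v ^ (l - 1) * v = v ^ l := by
    rw [← pow_succ, Nat.sub_add_cancel hl]
  have hsplit : v ^ (l - 1) * W = X * (v ^ (l - 1) * (d⁄dX ℚ) v) - v ^ l := by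
    rw [W, mul_sub, hvl, mul_left_comm]
  have hl0 : (l : ℚ) ≠ 0 := Nat.cast_ne_zero.mpr (by omega)
  have hD : ∀ m : ℕ, (l : ℚ) * PowerSeries.coeff m (v ^ (l - 1) * (d⁄dX ℚ) v)
      = PowerSeries.coeff (m + 1) (v ^ l) * (m + 1) := by
    intro m
    have h0 := PowerSeries.coeff_derivative (v ^ l) m
    rw [Derivation.leibniz_pow, map_nsmul, smul_eq_mul, nsmul_eq_mul] at h0
    exact h0
  rw [hsplit, map_sub]
  cases s with
  | zero =>
    rw [PowerSeries.coeff_zero_eq_constantCoeff, map_mul, PowerSeries.constantCoeff_X, zero_mul]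
    push_cast
    ring
  | succ s =>
    rw [PowerSeries.coeff_succ_X_mul]
    have := hD s
    field_simp
    push_cast at this ⊢
    linear_combination this

lemma coeff_K_even (N k : ℕ) (hk : k ≤ N) :
    PowerSeries.coeff (N + 2 * k) (K N) = 2 * k * b k := by
  rw [K, map_sum]
  have step : ∀ l ∈ Finset.Icc 1 N,
      PowerSeries.coeff (N + 2 * k) ((-1 : PowerSeries ℚ) ^ (l + 1) * (v ^ (l - 1) * W * X ^ (N - l)))
      = (-1 : ℚ) ^ (l + 1) * (((2 * k + l : ℚ) / l - 1) * (l.factorial * a k l / (2 * k + l).factorial)) := by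
    intro l hl
    rw [Finset.mem_Icc] at hl
    rw [coeff_neg_one_pow_mul, PowerSeries.coeff_mul_X_pow', if_pos (by omega : N - l ≤ N + 2 * k)]
    rw [show N + 2 * k - (N - l) = 2 * k + l by omega, coeff_Kterm hl.1, coeff_vpow l k]
    push_cast
    ring
  rw [Finset.sum_congr rfl step]
  have hsub : ∑ l ∈ Finset.Icc 1 N,
      (-1 : ℚ) ^ (l + 1) * (((2 * k + l : ℚ) / l - 1) * (l.factorial * a k l / (2 * k + l).factorial))
      = ∑ l ∈ Finset.Icc 1 k,
      (-1 : ℚ) ^ (l + 1) * (((2 * k + l : ℚ) / l - 1) * (l.factorial * a k l / (2 * k + l).factorial)) := by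
    refine (Finset.sum_subset ?_ ?_).symm
    · intro l hl
      rw [Finset.mem_Icc] at hl ⊢
      omega
    · intro l hl hl'
      rw [Finset.mem_Icc] at hl hl'
      rw [a_eq_zero (show k < l by omega)]
      ring
  rw [hsub, b, Finset.mul_sum]
  apply Finset.sum_congr rfl
  intro l hl
  rw [Finset.mem_Icc] at hl
  have hl0 : (l : ℚ) ≠ 0 := Nat.cast_ne_zero.mpr (by omega)
  have hf : ((2 * k + l).factorial : ℚ) ≠ 0 := Nat.cast_ne_zero.mpr (Nat.factorial_ne_zero _)
  have hlf : (l.factorial : ℚ) = (l : ℚ) * (l - 1).factorial := by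
    exact_mod_cast congrArg (Nat.cast : ℕ → ℚ) (Nat.mul_factorial_pred (by omega : l ≠ 0)).symm
  rw [hlf]
  field_simp
  ring

lemma coeff_K_zero (N t : ℕ) (h : t < N ∨ (t + N) % 2 = 1) :
    PowerSeries.coeff t (K N) = 0 := by
  rw [K, map_sum]
  apply Finset.sum_eq_zero
  intro l hl
  rw [Finset.mem_Icc] at hl
  rw [coeff_neg_one_pow_mul, PowerSeries.coeff_mul_X_pow']
  by_cases hle : N - l ≤ t
  · rw [if_pos hle, coeff_Kterm hl.1]
    have : PowerSeries.coeff (t - (N - l)) (v ^ l) = 0 := by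
      rcases h with h | h
      · exact coeff_vpow_of_lt (by omega)
      · exact coeff_vpow_odd l _ (by omega)
    rw [this]
    ring
  · rw [if_neg hle, mul_zero]

lemma keyE (N : ℕ) : ((X : PowerSeries ℚ) + v) * K N = W * (X ^ N - (-v) ^ N) := by
  have hG : K N = W * ∑ j ∈ Finset.range N, (-v) ^ j * (X : PowerSeries ℚ) ^ (N - 1 - j) := by
    rw [K, Finset.mul_sum, show Finset.Icc 1 N = Finset.Ico 1 (N + 1) by
      rw [Finset.Ico_add_one_right_eq_Icc], Finset.sum_Ico_eq_sum_range]
    rw [show N + 1 - 1 = N by omega]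
    apply Finset.sum_congr rfl
    intro j hj
    rw [show 1 + j - 1 = j by omega, show N - (1 + j) = N - 1 - j by omega, neg_pow]
    have h1 : (-1 : PowerSeries ℚ) ^ (1 + j + 1) = (-1 : PowerSeries ℚ) ^ j := by
      rw [show 1 + j + 1 = j + 2 by omega, pow_add]
      norm_num
    rw [h1]
    ring
  rw [hG]
  have hg := geom_sum₂_mul (-v) (X : PowerSeries ℚ) N
  linear_combination (-W) * hg

lemma coeff_negv_pow {s N : ℕ} (h : s < 3 * N) :
    PowerSeries.coeff s ((-v) ^ N) = 0 := by
  rw [neg_pow, coeff_neg_one_pow_mul, coeff_vpow_of_lt h, mul_zero]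

lemma coeff_Xv (j : ℕ) :
    PowerSeries.coeff j ((X : PowerSeries ℚ) + v) = if Odd j then (1 : ℚ) / j.factorial else 0 := by
  rw [map_add, PowerSeries.coeff_X, coeff_v]
  by_cases hj : j = 1
  · subst hj
    norm_num [Nat.factorial]
  · by_cases ho : Odd j
    · rw [if_neg hj, if_pos ⟨ho, hj⟩, if_pos ho, zero_add]
    · rw [if_neg hj, if_neg (fun hc => ho hc.1), if_neg ho, zero_add]

noncomputable def g (k : ℕ) : ℚ := 2 * k * b k

lemma star (n : ℕ) (hn : 1 ≤ n) :
    ∑ i ∈ Finset.range (n + 1), g (n - i) / (2 * i + 1).factorial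
      = 2 * n / (2 * n + 1).factorial := by
  have hL : PowerSeries.coeff (2 * n + (n + 1) + 1) (((X : PowerSeries ℚ) + v) * K (n + 1))
      = ∑ i ∈ Finset.range (n + 1), g (n - i) / (2 * i + 1).factorial := by
    rw [PowerSeries.coeff_mul, Finset.Nat.sum_antidiagonal_eq_sum_range_succ_mk]
    dsimp only
    rw [sum_range_shift _ (2 * n + (n + 1) + 1) (n + 1) 1]
    · apply Finset.sum_congr rfl
      intro i hi
      rw [Finset.mem_range] at hi
      rw [coeff_Xv, if_pos (odd_two_mul_add_one i),
        show 2 * n + (n + 1) + 1 - (2 * i + 1) = (n + 1) + 2 * (n - i) by omega,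
        coeff_K_even (n + 1) (n - i) (by omega)]
      rw [g]
      ring
    · intro j hj hji
      by_cases ho : Odd j
      · have hj2 : 2 * (n + 1) + 1 ≤ j := by
          rcases ho with ⟨i, hi⟩
          have := hji i
          omega
        rw [coeff_K_zero (n + 1) _ (Or.inl (by omega)), mul_zero]
      · rw [coeff_Xv, if_neg ho, zero_mul]
    · intro i hi
      omega
  have hR : PowerSeries.coeff (2 * n + (n + 1) + 1) (W * ((X : PowerSeries ℚ) ^ (n + 1) - (-v) ^ (n + 1)))
      = 2 * n / (2 * n + 1).factorial := by
    rw [mul_sub, map_sub]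
    have h1 : PowerSeries.coeff (2 * n + (n + 1) + 1) (W * (X : PowerSeries ℚ) ^ (n + 1))
        = 2 * n / (2 * n + 1).factorial := by
      rw [PowerSeries.coeff_mul_X_pow', if_pos (by omega)]
      rw [show 2 * n + (n + 1) + 1 - (n + 1) = 2 * n + 1 by omega]
      rw [W, map_sub, PowerSeries.coeff_succ_X_mul, coeff_Dv, coeff_v]
      rw [if_pos ⟨even_two_mul n, by omega⟩,
        if_pos ⟨odd_two_mul_add_one n, by omega⟩]
      rw [show (2 * n + 1).factorial = (2 * n + 1) * (2 * n).factorial from Nat.factorial_succ _]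
      have hf : ((2 * n).factorial : ℚ) ≠ 0 := Nat.cast_ne_zero.mpr (Nat.factorial_ne_zero _)
      have hn1 : (2 * (n : ℚ) + 1) ≠ 0 := by positivity
      push_cast
      field_simp
      ring
    have h2 : PowerSeries.coeff (2 * n + (n + 1) + 1) (W * (-v) ^ (n + 1)) = 0 := by
      rw [PowerSeries.coeff_mul]
      apply Finset.sum_eq_zero
      intro p hp
      rw [Finset.HasAntidiagonal.mem_antidiagonal] at hp
      rw [coeff_negv_pow (show p.2 < 3 * (n + 1) by omega), mul_zero]
    rw [h1, h2, sub_zero]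
  rw [← hL, keyE, hR]

noncomputable def M : PowerSeries ℚ :=
  PowerSeries.mk fun t => if Even t ∧ t ≠ 0 then 2 ^ t * bernoulli t / t.factorial else 0

noncomputable def c (k : ℕ) : ℚ :=
  if k = 0 then 0 else 2 ^ (2 * k) * bernoulli (2 * k) / (2 * k).factorial

lemma coeff_M_even (k : ℕ) : PowerSeries.coeff (2 * k) M = c k := by
  rw [M, coeff_mk, c]
  by_cases hk : k = 0
  · subst hk
    norm_num
  · rw [if_pos ⟨even_two_mul k, by omega⟩, if_neg hk]

lemma M_eq : M = PowerSeries.rescale 2 (bernoulliPowerSeries ℚ) - 1 + X := by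
  ext t
  rw [map_add, map_sub, PowerSeries.coeff_rescale, M, coeff_mk,
    bernoulliPowerSeries, coeff_mk, PowerSeries.coeff_one, PowerSeries.coeff_X,
    Algebra.algebraMap_self_apply]
  match t with
  | 0 => norm_num [bernoulli_zero]
  | 1 => norm_num [bernoulli_one]
  | (t + 2) =>
    have h0 : (t + 2 : ℕ) ≠ 0 := by omega
    have h1 : (t + 2 : ℕ) ≠ 1 := by omega
    rw [if_neg (show ¬(t + 2 = 0) from h0), if_neg (show ¬(t + 2 = 1) from h1)]
    by_cases he : Even (t + 2)
    · rw [if_pos (show Even (t + 2) ∧ (t + 2) ≠ 0 from ⟨he, h0⟩)]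
      ring
    · rw [if_neg (show ¬(Even (t + 2) ∧ (t + 2) ≠ 0) from fun hc => he hc.1)]
      have hodd : Odd (t + 2) := Nat.odd_iff.mpr (by rw [Nat.even_iff] at he; omega)
      rw [bernoulli_eq_bernoulli'_of_ne_one h1, bernoulli'_eq_zero_of_odd hodd (by omega)]
      ring

noncomputable def E : PowerSeries ℚ := PowerSeries.exp ℚ

noncomputable def F : PowerSeries ℚ := PowerSeries.rescale (-1 : ℚ) (PowerSeries.exp ℚ)

lemma hEF : E * F = 1 := by
  have h := PowerSeries.exp_mul_exp_eq_exp_add (1 : ℚ) (-1)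
  rw [PowerSeries.rescale_one] at h
  norm_num at h
  rw [E, F]
  exact h

lemma hE2 : PowerSeries.rescale (2 : ℚ) (PowerSeries.exp ℚ) = E * E := by
  have h := PowerSeries.exp_mul_exp_eq_exp_add (1 : ℚ) 1
  rw [PowerSeries.rescale_one] at h
  norm_num at h
  rw [E, ← h]

lemma hX2 : PowerSeries.rescale (2 : ℚ) (X : PowerSeries ℚ) = PowerSeries.C 2 * X := by
  ext t
  rw [PowerSeries.coeff_rescale, PowerSeries.coeff_C_mul, PowerSeries.coeff_X]
  by_cases ht : t = 1
  · subst ht; norm_num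
  · rw [if_neg ht]; ring

lemma hB : PowerSeries.rescale (2 : ℚ) (bernoulliPowerSeries ℚ) * (E * E - 1)
    = PowerSeries.C 2 * X := by
  have h2 := congrArg (PowerSeries.rescale (2 : ℚ)) (bernoulliPowerSeries_mul_exp_sub_one ℚ)
  rw [map_mul, map_sub, map_one, hE2, hX2] at h2
  exact h2

lemma keyB : (E - F) * M = X * (E + F) - (E - F) := by
  have hM : M + 1 - X = PowerSeries.rescale (2 : ℚ) (bernoulliPowerSeries ℚ) := by
    rw [M_eq]; ring
  have hC2 : (PowerSeries.C) 2 = (2 : PowerSeries ℚ) := map_ofNat _ 2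
  have h2 : (M + 1 - X) * (E * E - 1) = 2 * X := by
    rw [hM, ← hC2]; exact hB
  linear_combination F * h2 - (M + 1 - X) * E * hEF

lemma coeff_E (j : ℕ) : PowerSeries.coeff j E = 1 / j.factorial := by
  rw [E, PowerSeries.coeff_exp, Algebra.algebraMap_self_apply]

lemma coeff_F (j : ℕ) : PowerSeries.coeff j F = (-1) ^ j / j.factorial := by
  rw [F, PowerSeries.coeff_rescale, PowerSeries.coeff_exp, Algebra.algebraMap_self_apply]
  ring

lemma coeff_EF_sub (j : ℕ) :
    PowerSeries.coeff j (E - F) = if Odd j then (2 : ℚ) / j.factorial else 0 := by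
  rw [map_sub, coeff_E, coeff_F]
  by_cases ho : Odd j
  · rw [if_pos ho, Odd.neg_one_pow ho]
    ring
  · rw [if_neg ho, Even.neg_one_pow (Nat.not_odd_iff_even.mp ho)]
    ring

lemma coeff_EF_add (j : ℕ) :
    PowerSeries.coeff j (E + F) = if Even j then (2 : ℚ) / j.factorial else 0 := by
  rw [map_add, coeff_E, coeff_F]
  by_cases he : Even j
  · rw [if_pos he, Even.neg_one_pow he]
    ring
  · rw [if_neg he, Odd.neg_one_pow (Nat.not_even_iff_odd.mp he)]
    ring

lemma starB (n : ℕ) (hn : 1 ≤ n) :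
    ∑ i ∈ Finset.range (n + 1), c (n - i) / (2 * i + 1).factorial
      = 2 * n / (2 * n + 1).factorial := by
  have hL : PowerSeries.coeff (2 * n + 1) ((E - F) * M)
      = ∑ i ∈ Finset.range (n + 1), 2 * (c (n - i) / (2 * i + 1).factorial) := by
    rw [PowerSeries.coeff_mul, Finset.Nat.sum_antidiagonal_eq_sum_range_succ_mk]
    dsimp only
    rw [sum_range_shift _ (2 * n + 1) (n + 1) 1]
    · apply Finset.sum_congr rfl
      intro i hi
      rw [Finset.mem_range] at hi
      rw [coeff_EF_sub, if_pos (odd_two_mul_add_one i),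
        show 2 * n + 1 - (2 * i + 1) = 2 * (n - i) by omega, coeff_M_even]
      ring
    · intro j hj hji
      by_cases ho : Odd j
      · obtain ⟨i0, hi0⟩ := ho
        exact absurd (by omega : j = 2 * i0 + 1) (hji i0 (by omega))
      · rw [coeff_EF_sub, if_neg ho, zero_mul]
    · intro i hi
      omega
  have hR : PowerSeries.coeff (R := ℚ) (2 * n + 1) (X * (E + F) - (E - F))
      = 2 * (2 * n / (2 * n + 1).factorial) := by
    rw [map_sub, PowerSeries.coeff_succ_X_mul, coeff_EF_add, coeff_EF_sub,
      if_pos (even_two_mul n), if_pos (odd_two_mul_add_one n)]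
    rw [show (2 * n + 1).factorial = (2 * n + 1) * (2 * n).factorial from Nat.factorial_succ _]
    have hf : ((2 * n).factorial : ℚ) ≠ 0 := Nat.cast_ne_zero.mpr (Nat.factorial_ne_zero _)
    have hn1 : (2 * (n : ℚ) + 1) ≠ 0 := by positivity
    push_cast
    field_simp
    ring
  have hkey : PowerSeries.coeff (2 * n + 1) ((E - F) * M)
      = 2 * (2 * n / (2 * n + 1).factorial) := by
    rw [keyB]; exact hR
  have h := hL.symm.trans hkey
  rw [← Finset.mul_sum] at h
  exact mul_left_cancel₀ (by norm_num : (2 : ℚ) ≠ 0) h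

lemma g_eq_c : ∀ k, g k = c k := by
  intro k
  induction k using Nat.strong_induction_on with
  | _ k ih =>
    match k with
    | 0 => simp [g, c, b]
    | k + 1 =>
      have h1 := star (k + 1) (by omega)
      have h2 := starB (k + 1) (by omega)
      rw [Finset.sum_range_succ'] at h1 h2
      have h := h1.trans h2.symm
      have hrest : ∑ i ∈ Finset.range (k + 1), g (k + 1 - (i + 1)) / (2 * (i + 1) + 1).factorial
          = ∑ i ∈ Finset.range (k + 1), c (k + 1 - (i + 1)) / (2 * (i + 1) + 1).factorial := by
        apply Finset.sum_congr rfl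
        intro i hi
        rw [ih (k + 1 - (i + 1)) (by omega)]
      rw [hrest] at h
      have h' : g (k + 1 - 0) / ((2 * 0 + 1).factorial : ℚ)
          = c (k + 1 - 0) / ((2 * 0 + 1).factorial : ℚ) := by
        have := h
        linarith [this]
      simpa [Nat.factorial] using h'

lemma P_term {l n : ℕ} (h1 : 1 ≤ l) (h2 : l ≤ n) :
    P (n + 1 - l) n = 6 ^ n * ((l - 1).factorial * a n l / (2 * n + l).factorial) := by
  rw [P, show n + 1 - (n + 1 - l) = l by omega, show 3 * n + 1 - (n + 1 - l) = 2 * n + l by omega]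
  have hC := Nat.choose_mul_factorial_mul_factorial (show 2 * n ≤ 2 * n + l by omega)
  rw [show 2 * n + l - 2 * n = l by omega] at hC
  have hf1 : ((2 * n).factorial : ℚ) ≠ 0 := Nat.cast_ne_zero.mpr (Nat.factorial_ne_zero _)
  have hf2 : ((l).factorial : ℚ) ≠ 0 := Nat.cast_ne_zero.mpr (Nat.factorial_ne_zero _)
  have hCQ' : (((2 * n + l).choose (2 * n)) : ℚ) * ((2 * n).factorial) * (l.factorial)
      = (2 * n + l).factorial := by exact_mod_cast congrArg (Nat.cast : ℕ → ℚ) hC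
  have hCQ : (((2 * n + l).choose (2 * n)) : ℚ)
      = (2 * n + l).factorial / ((2 * n).factorial * l.factorial) := by
    rw [eq_div_iff (mul_ne_zero hf1 hf2)]
    linear_combination hCQ'
  have hlf : (l.factorial : ℚ) = (l : ℚ) * (l - 1).factorial := by
    exact_mod_cast congrArg (Nat.cast : ℕ → ℚ) (Nat.mul_factorial_pred (by omega : l ≠ 0)).symm
  have hl0 : (l : ℚ) ≠ 0 := Nat.cast_ne_zero.mpr (by omega)
  have hf3 : ((2 * n + l).factorial : ℚ) ≠ 0 := Nat.cast_ne_zero.mpr (Nat.factorial_ne_zero _)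
  have hf4 : ((l - 1).factorial : ℚ) ≠ 0 := Nat.cast_ne_zero.mpr (Nat.factorial_ne_zero _)
  rw [hCQ, hlf]
  field_simp

end Riordan

/-- For every integer `n ≥ 1`,
`B_{2n}/(2n) = ((2n)!/(6^n·2^{2n})) · ∑_{l=1}^{n} (−1)^{l+1} · P(n+1−l, n)`. -/
theorem bernoulli_div_eq_P_sum (n : ℕ) (hn : 1 ≤ n) :
    bernoulli (2 * n) / (2 * n) =
      ((Nat.factorial (2 * n) : ℚ) / (6 ^ n * 2 ^ (2 * n))) *
        ∑ l ∈ Finset.Icc 1 n, (-1 : ℚ) ^ (l + 1) * P (n + 1 - l) n := by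
  classical
  have hsum : ∑ l ∈ Finset.Icc 1 n, (-1 : ℚ) ^ (l + 1) * P (n + 1 - l) n
      = 6 ^ n * Riordan.b n := by
    rw [Riordan.b, Finset.mul_sum]
    apply Finset.sum_congr rfl
    intro l hl
    rw [Finset.mem_Icc] at hl
    rw [Riordan.P_term hl.1 hl.2]
    ring
  have hgc := Riordan.g_eq_c n
  rw [Riordan.g, Riordan.c, if_neg (by omega)] at hgc
  have h2n : (2 * (n : ℚ)) ≠ 0 := by positivity
  have hf : ((2 * n).factorial : ℚ) ≠ 0 := Nat.cast_ne_zero.mpr (Nat.factorial_ne_zero _)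
  have h6 : (6 : ℚ) ^ n ≠ 0 := by positivity
  have h4 : (2 : ℚ) ^ (2 * n) ≠ 0 := by positivity
  rw [eq_div_iff hf] at hgc
  rw [hsum, div_mul_eq_mul_div, div_eq_div_iff (by push_cast; positivity) (mul_ne_zero h6 h4)]
  push_cast at hgc ⊢
  linear_combination (-(6 : ℚ) ^ n) * hgc
end

section
/- ζ′(3) = 2π² · ζ″(−2) + (ln(2π) − 3/2 + γ) · ζ(3), where ζ′ and ζ″ denote the first and second derivatives of the Riemann zeta function and γ is the Euler–Mascheroni constant. -/
open Complex Filter Topology Set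

noncomputable def Afun (s : ℂ) : ℂ := 2 * (2 * (Real.pi : ℂ)) ^ (-s)
noncomputable def Gfun (s : ℂ) : ℂ := Afun s * Complex.Gamma s * riemannZeta s
noncomputable def Cfun (s : ℂ) : ℂ := Complex.cos ((Real.pi : ℂ) * s / 2)

lemma hinner (s : ℂ) : HasDerivAt (fun s : ℂ => (Real.pi : ℂ) * s / 2) ((Real.pi : ℂ) / 2) s := by
  simpa using ((hasDerivAt_id s).const_mul ((Real.pi : ℂ))).div_const 2

lemma hCd (s : ℂ) :
    HasDerivAt Cfun (-Complex.sin ((Real.pi : ℂ) * s / 2) * ((Real.pi : ℂ) / 2)) s :=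
  (hinner s).ccos

lemma deriv_Cfun :
    deriv Cfun = fun s => -Complex.sin ((Real.pi : ℂ) * s / 2) * ((Real.pi : ℂ) / 2) :=
  funext fun s => (hCd s).deriv

lemma hCd2 (s : ℂ) :
    HasDerivAt (deriv Cfun)
      (-(Complex.cos ((Real.pi : ℂ) * s / 2) * ((Real.pi : ℂ) / 2)) * ((Real.pi : ℂ) / 2)) s := by
  rw [deriv_Cfun]
  exact ((hinner s).csin.neg).mul_const _

lemma h2pi : (2 * (Real.pi : ℂ)) ≠ 0 := by
  simp [Real.pi_ne_zero]

lemma hAd (s : ℂ) :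
    HasDerivAt Afun (2 * ((2 * (Real.pi : ℂ)) ^ (-s) * Complex.log (2 * (Real.pi : ℂ)) * (-1))) s :=
  ((hasDerivAt_neg' s).const_cpow (Or.inl h2pi)).const_mul 2

lemma hne {s : ℂ} (hs : 2 < s.re) : ∀ m : ℕ, s ≠ -m := by
  intro m h
  rw [h] at hs
  simp only [Complex.neg_re, Complex.natCast_re] at hs
  have : (0:ℝ) ≤ (m:ℝ) := m.cast_nonneg
  linarith

lemma hne1 {s : ℂ} (hs : 2 < s.re) : s ≠ 1 := by
  intro h; rw [h] at hs; simp at hs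

lemma hGdiff {s : ℂ} (hs : 2 < s.re) : DifferentiableAt ℂ Gfun s := by
  exact (((hAd s).differentiableAt.mul
    (Complex.differentiableAt_Gamma s (hne hs))).mul
    (differentiableAt_riemannZeta (hne1 hs)))

lemma hVopen : IsOpen {s : ℂ | 2 < s.re} := isOpen_lt continuous_const Complex.continuous_re

lemma h3mem : (3 : ℂ) ∈ {s : ℂ | 2 < s.re} := by norm_num [Complex.re_ofNat]

lemma hGanalytic : AnalyticOnNhd ℂ Gfun {s : ℂ | 2 < s.re} := by
  have : DifferentiableOn ℂ Gfun {s : ℂ | 2 < s.re} :=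
    fun s hs => (hGdiff hs).differentiableWithinAt
  exact this.analyticOnNhd hVopen

lemma harmonic_two : harmonic 2 = 3/2 := by
  rw [show (2:ℕ) = 1 + 1 from rfl, harmonic_succ, show (1:ℕ) = 0 + 1 from rfl, harmonic_succ,
    harmonic_zero]
  norm_num

lemma hGamma3 : HasDerivAt Complex.Gamma (3 - 2*(Real.eulerMascheroniConstant:ℂ)) 3 := by
  have h := Complex.hasDerivAt_Gamma_nat 2
  rw [harmonic_two] at h
  norm_num at h
  convert h using 1
  push_cast
  ring

lemma hZ3 : HasDerivAt riemannZeta (deriv riemannZeta 3) 3 :=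
  (differentiableAt_riemannZeta (by norm_num)).hasDerivAt

lemma hcos32 : Complex.cos ((Real.pi : ℂ) * 3 / 2) = 0 := by
  have h : ((Real.pi:ℂ) * 3 / 2) = (((Real.pi * 3 / 2 : ℝ)):ℂ) := by push_cast; ring
  rw [h, ← Complex.ofReal_cos]
  have : Real.pi * 3 / 2 = Real.pi + Real.pi / 2 := by ring
  rw [this, Real.cos_add, Real.cos_pi, Real.sin_pi, Real.cos_pi_div_two, Real.sin_pi_div_two]
  norm_num

lemma hsin32 : Complex.sin ((Real.pi : ℂ) * 3 / 2) = -1 := by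
  have h : ((Real.pi:ℂ) * 3 / 2) = (((Real.pi * 3 / 2 : ℝ)):ℂ) := by push_cast; ring
  rw [h, ← Complex.ofReal_sin]
  have : Real.pi * 3 / 2 = Real.pi + Real.pi / 2 := by ring
  rw [this, Real.sin_add, Real.cos_pi, Real.sin_pi, Real.cos_pi_div_two, Real.sin_pi_div_two]
  norm_num

lemma hGammaval : Complex.Gamma 3 = 2 := by
  have := Complex.Gamma_nat_eq_factorial 2
  norm_num at this
  convert this using 2 <;> norm_num

lemma hc3 : (2*(Real.pi:ℂ)) ^ (-(3:ℂ)) = ((2*(Real.pi:ℂ))^(3:ℕ))⁻¹ := by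
  rw [Complex.cpow_neg, show ((3:ℂ)) = ((3:ℕ):ℂ) by norm_num, Complex.cpow_natCast]

lemma hlog2pi : Complex.log (2*(Real.pi:ℂ)) = ((Real.log (2*Real.pi)):ℂ) := by
  rw [show (2*(Real.pi:ℂ)) = (((2*Real.pi : ℝ)):ℂ) by push_cast; ring,
    ← Complex.ofReal_log (by positivity)]

/-- `ζ′(3) = 2π²·ζ″(−2) + (ln(2π) − 3/2 + γ)·ζ(3)`, where `ζ′` and `ζ″`
are the first and second derivatives of the Riemann zeta function and `γ` is the
Euler–Mascheroni constant. -/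
theorem deriv_zeta_three :
    deriv riemannZeta 3 =
      2 * (Real.pi : ℂ) ^ 2 * iteratedDeriv 2 riemannZeta (-2) +
        ((Real.log (2 * Real.pi) : ℂ) - 3 / 2 + (Real.eulerMascheroniConstant : ℂ)) *
          riemannZeta 3 := by
  have h3V : {s : ℂ | 2 < s.re} ∈ 𝓝 (3:ℂ) := hVopen.mem_nhds h3mem
  -- functional equation eventually
  have hEq : (fun s => riemannZeta (1 - s)) =ᶠ[𝓝 (3:ℂ)] fun s => Gfun s * Cfun s := by
    filter_upwards [h3V] with s hs
    rw [riemannZeta_one_sub (hne hs) (hne1 hs)]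
    simp only [Gfun, Afun, Cfun]
    ring
  -- left side
  have hL : deriv (deriv (fun s : ℂ => riemannZeta (1 - s))) 3
      = deriv (deriv riemannZeta) (-2) := by
    have e1 : deriv (fun s : ℂ => riemannZeta (1 - s))
        = fun s => -deriv riemannZeta (1 - s) :=
      funext fun s => deriv_comp_const_sub riemannZeta 1 s
    rw [e1]
    have e2 : deriv (fun s : ℂ => -deriv riemannZeta (1 - s)) 3
        = -deriv (fun s : ℂ => deriv riemannZeta (1 - s)) 3 := deriv.neg
    rw [e2, deriv_comp_const_sub]
    norm_num
  -- product rule eventually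
  have hprod : deriv (fun s => Gfun s * Cfun s)
      =ᶠ[𝓝 (3:ℂ)] fun s => deriv Gfun s * Cfun s + Gfun s * deriv Cfun s := by
    filter_upwards [h3V] with s hs
    exact deriv_mul (hGdiff hs) (hCd s).differentiableAt
  have hG3 : HasDerivAt Gfun
      ((2 * ((2 * (Real.pi:ℂ)) ^ (-3:ℂ) * Complex.log (2 * (Real.pi:ℂ)) * -1) * Complex.Gamma 3 +
          Afun 3 * (3 - 2 * (Real.eulerMascheroniConstant:ℂ))) * riemannZeta 3 +
        Afun 3 * Complex.Gamma 3 * deriv riemannZeta 3) 3 := by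
    exact ((hAd 3).mul hGamma3).mul hZ3
  have hdG : DifferentiableAt ℂ (deriv Gfun) 3 := (hGanalytic.deriv 3 h3mem).differentiableAt
  have hBig := (hdG.hasDerivAt.mul (hCd 3)).add (hG3.mul (hCd2 3))
  have hζ'' : iteratedDeriv 2 riemannZeta (-2)
      = deriv (fun s => deriv Gfun s * Cfun s + Gfun s * deriv Cfun s) 3 := by
    rw [show iteratedDeriv 2 riemannZeta = iteratedDeriv (1 + 1) riemannZeta from rfl, iteratedDeriv_succ, iteratedDeriv_one, ← hL,
      hEq.deriv.deriv_eq, hprod.deriv_eq]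
  rw [hζ'', (show HasDerivAt (fun s => deriv Gfun s * Cfun s + Gfun s * deriv Cfun s) _ 3 from hBig).deriv, hG3.deriv, deriv_Cfun]
  simp only [Gfun, Afun, Cfun, hcos32, hsin32, hGammaval, hc3, hlog2pi]
  have hπ : (Real.pi:ℂ) ≠ 0 := Complex.ofReal_ne_zero.mpr Real.pi_ne_zero
  field_simp [hπ, h2pi]
  ring
end
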